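/- For any prime p ≥ 5, ∑_{k=0}^{p-1} C(2k,k)·H_k ≡ −(p/3)·q_p(3) (mod p), where H_k = ∑_{i=1}^k 1/i is the k-th harmonic number computed modulo p and q_p(3) = (3^{p-1} − 1)/p is the Fermat quotient. -/

import Mathlib

def legendre3 (p : ℕ) : ℤ :=
  if p % 3 = 1 then 1 else if p % 3 = 2 then -1 else 0

/-- The Fermat quotient q_p(a) = (a^(p-1) - 1)/p. -/
def fermatQuotient (p : ℕ) (a : ℤ) : ℤ := (a ^ (p - 1) - 1) / p

/-- The k-th harmonic number computed in ZMod p. -/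
def harmonicZMod (p : ℕ) (k : ℕ) : ZMod p := ∑ i ∈ Finset.Icc 1 k, ((i : ZMod p))⁻¹

namespace SCBH
open Finset

/-! ### Sums of odd-index binomial coefficients via `ℤ√d` -/

lemma zsq_pow (d : ℤ) (n : ℕ) : (⟨1,1⟩ : ℤ√d)^n =
    ⟨∑ i ∈ range (n+1), (n.choose (2*i) : ℤ) * d^i,
     ∑ i ∈ range (n+1), (n.choose (2*i+1) : ℤ) * d^i⟩ := by
  induction n with
  | zero => rw [Zsqrtd.ext_iff]; simp
  | succ n ih =>
    have htop1 : (n.choose (2*(n+1)) : ℤ) * d^(n+1) = 0 := by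
      rw [show n.choose (2*(n+1)) = 0 from Nat.choose_eq_zero_of_lt (by omega)]; simp
    have htop2 : (n.choose (2*(n+1)+1) : ℤ) * d^(n+1) = 0 := by
      rw [show n.choose (2*(n+1)+1) = 0 from Nat.choose_eq_zero_of_lt (by omega)]; simp
    rw [pow_succ, ih, Zsqrtd.ext_iff]
    constructor
    · show (∑ i ∈ range (n+1), (n.choose (2*i) : ℤ) * d^i) * 1
          + d * (∑ i ∈ range (n+1), (n.choose (2*i+1) : ℤ) * d^i) * 1
        = ∑ i ∈ range (n+2), ((n+1).choose (2*i) : ℤ) * d^i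
      rw [Finset.sum_range_succ' (fun i => ((n+1).choose (2*i) : ℤ) * d^i)]
      have e1 : ∀ j ∈ range (n+1), ((n+1).choose (2*(j+1)) : ℤ) * d^(j+1)
          = (n.choose (2*j+1) : ℤ) * d^(j+1) + (n.choose (2*(j+1)) : ℤ) * d^(j+1) := by
        intro j _
        rw [show 2*(j+1) = (2*j+1)+1 by ring, Nat.choose_succ_succ]; push_cast; ring
      rw [Finset.sum_congr rfl e1, Finset.sum_add_distrib]
      have e2 : ∑ i ∈ range (n+1), (n.choose (2*i) : ℤ) * d^i
          = (∑ j ∈ range (n+1), (n.choose (2*(j+1)) : ℤ) * d^(j+1)) + 1 := by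
        have h := Finset.sum_range_succ' (fun i => (n.choose (2*i) : ℤ) * d^i) (n+1)
        rw [Finset.sum_range_succ, htop1, add_zero] at h
        simpa using h
      have e3 : d * ∑ i ∈ range (n+1), (n.choose (2*i+1) : ℤ) * d^i
          = ∑ j ∈ range (n+1), (n.choose (2*j+1) : ℤ) * d^(j+1) := by
        rw [Finset.mul_sum]; exact Finset.sum_congr rfl (fun j _ => by ring)
      rw [mul_one, mul_one, e3, e2]
      norm_num
      ring
    · show (∑ i ∈ range (n+1), (n.choose (2*i) : ℤ) * d^i) * 1
          + (∑ i ∈ range (n+1), (n.choose (2*i+1) : ℤ) * d^i) * 1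
        = ∑ i ∈ range (n+2), ((n+1).choose (2*i+1) : ℤ) * d^i
      have e1 : ∀ i ∈ range (n+2), ((n+1).choose (2*i+1) : ℤ) * d^i
          = (n.choose (2*i) : ℤ) * d^i + (n.choose (2*i+1) : ℤ) * d^i := by
        intro i _; rw [Nat.choose_succ_succ]; push_cast; ring
      rw [Finset.sum_congr rfl e1, Finset.sum_add_distrib,
        Finset.sum_range_succ (fun i => (n.choose (2*i) : ℤ) * d^i) (n+1),
        Finset.sum_range_succ (fun i => (n.choose (2*i+1) : ℤ) * d^i) (n+1), htop1, htop2]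
      ring

lemma zpow_one_eval (n : ℕ) : (⟨1,1⟩ : ℤ√1)^(n+1) = ⟨2^n, 2^n⟩ := by
  induction n with
  | zero => rw [pow_one]; norm_num
  | succ n ih =>
    rw [pow_succ, ih, Zsqrtd.ext_iff]
    constructor
    · show (2^n : ℤ) * 1 + 1 * (2^n) * 1 = 2^(n+1); ring
    · show (2^n : ℤ) * 1 + (2^n) * 1 = 2^(n+1); ring

lemma zm3_cube : (⟨1,1⟩ : ℤ√(-3))^3 = ((-8 : ℤ) : ℤ√(-3)) := by
  rw [pow_succ, pow_succ, pow_one, Zsqrtd.ext_iff]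
  constructor
  · simp [Zsqrtd.re_mul, Zsqrtd.im_mul, Zsqrtd.re_intCast]
  · simp [Zsqrtd.re_mul, Zsqrtd.im_mul, Zsqrtd.im_intCast]

lemma zm3_sq : (⟨1,1⟩ : ℤ√(-3))^2 = ⟨-2, 2⟩ := by
  rw [pow_two, Zsqrtd.ext_iff]
  constructor
  · simp [Zsqrtd.re_mul]
  · simp [Zsqrtd.im_mul]

lemma zm3_pow_p (p q : ℕ) (h1 : p = 6*q+1) :
    ((⟨1,1⟩ : ℤ√(-3))^p).im = 2^(p-1) := by
  subst h1
  rw [show 6*q+1 = 3*(2*q)+1 by ring, pow_add, pow_mul, zm3_cube, pow_one,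
    ← Int.cast_pow, Zsqrtd.im_smul]
  have h : ((-8:ℤ))^(2*q) = 2^(6*q) := by
    rw [show (-8:ℤ) = (-1)*2^3 by norm_num, mul_pow, ← pow_mul]
    rw [show ((-1:ℤ))^(2*q) = 1 by rw [pow_mul]; norm_num]
    rw [show 3*(2*q) = 6*q by ring]; ring
  rw [show 3*(2*q)+1-1 = 6*q by omega]
  simp [h]

lemma zm3_pow_p' (p q : ℕ) (h1 : p = 6*q+5) :
    ((⟨1,1⟩ : ℤ√(-3))^p).im = -2^(p-1) := by
  subst h1
  rw [show 6*q+5 = 3*(2*q+1)+2 by ring, pow_add, pow_mul, zm3_cube, zm3_sq,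
    ← Int.cast_pow, Zsqrtd.im_smul]
  have h2 : (⟨-2,2⟩ : ℤ√(-3)).im = 2 := rfl
  rw [h2]
  rw [show (-8:ℤ) = (-1)*2^3 by norm_num, mul_pow, ← pow_mul]
  rw [show ((-1:ℤ))^(2*q+1) = -1 by rw [pow_succ, pow_mul]; norm_num]
  rw [show 3*(2*q+1)+2-1 = 3*(2*q+1)+1 by omega]
  ring

lemma mod_six (p : ℕ) (hp : p.Prime) (hp5 : 5 ≤ p) : p % 6 = 1 ∨ p % 6 = 5 := by
  have h2 : ¬ (2 ∣ p) := by
    intro h; rcases (Nat.Prime.eq_one_or_self_of_dvd hp 2 h) with h' | h' <;> omega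
  have h3 : ¬ (3 ∣ p) := by
    intro h; rcases (Nat.Prime.eq_one_or_self_of_dvd hp 3 h) with h' | h' <;> omega
  rw [Nat.dvd_iff_mod_eq_zero] at h2 h3
  omega

lemma trunc_sum (p : ℕ) (f : ℕ → ℤ) :
    ∑ i ∈ range (p+1), (p.choose (2*i+1) : ℤ) * f i
      = ∑ i ∈ range ((p-1)/2 + 1), (p.choose (2*i+1) : ℤ) * f i := by
  apply (Finset.sum_subset (Finset.range_subset_range.mpr (by omega)) ?_).symm
  intro i _ hi
  rw [Finset.mem_range, not_lt] at hi
  rw [Nat.choose_eq_zero_of_lt (by omega)]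
  simp

lemma sum_odd_neg3 (p : ℕ) (hp : p.Prime) (hp5 : 5 ≤ p) :
    ∑ i ∈ range ((p-1)/2 + 1), (p.choose (2*i+1) : ℤ) * (-3)^i
      = legendre3 p * 2^(p-1) := by
  rw [← trunc_sum]
  have h := congrArg Zsqrtd.im (zsq_pow (-3) p)
  simp only at h
  rw [← h]
  rcases mod_six p hp hp5 with h6 | h6
  · rw [zm3_pow_p p (p/6) (by omega), legendre3, if_pos (by omega)]; ring
  · rw [zm3_pow_p' p (p/6) (by omega), legendre3, if_neg (by omega), if_pos (by omega)]; ring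

lemma sum_odd_one (p : ℕ) (hp5 : 5 ≤ p) :
    ∑ i ∈ range ((p-1)/2 + 1), (p.choose (2*i+1) : ℤ) * 1^i = 2^(p-1) := by
  rw [← trunc_sum]
  have h := congrArg Zsqrtd.im (zsq_pow 1 p)
  simp only at h
  rw [← h, show p = (p-1)+1 by omega, zpow_one_eval]; norm_num

/-! ### mod-p lemmas -/

lemma sum_Icc_one {M : Type*} [AddCommMonoid M] (f : ℕ → M) (m : ℕ) :
    ∑ j ∈ Icc 1 m, f j = ∑ i ∈ range m, f (i+1) := by
  induction m with
  | zero => simp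
  | succ m ih => rw [Finset.sum_Icc_succ_top (by omega), ih, Finset.sum_range_succ]

section main
variable (p : ℕ) [hp : Fact p.Prime] (hp5 : 5 ≤ p)

lemma podd (hp5' : 5 ≤ p) : 2 * ((p-1)/2) + 1 = p := by
  have h2 : ¬ (2 ∣ p) := by
    intro h; rcases (Nat.Prime.eq_one_or_self_of_dvd hp.out 2 h) with h' | h' <;> omega
  rw [Nat.dvd_iff_mod_eq_zero] at h2
  omega

lemma natcast_ne_zero {j : ℕ} (h0 : j ≠ 0) (hj : j < p) : ((j : ℕ) : ZMod p) ≠ 0 := by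
  rw [Ne, ZMod.natCast_eq_zero_iff]
  intro h; exact absurd (Nat.le_of_dvd (by omega) h) (by omega)

lemma choose_p_sub_one {j : ℕ} (hj : j ≤ p - 1) :
    (((p-1).choose j : ℕ) : ZMod p) = (-1)^j := by
  induction j with
  | zero => simp
  | succ j ih =>
    have h1 : (((p).choose (j+1) : ℕ) : ZMod p) = 0 := by
      rw [ZMod.natCast_eq_zero_iff]
      exact hp.out.dvd_choose_self (by omega) (by omega)
    have h2 : (p-1).choose j + (p-1).choose (j+1) = p.choose (j+1) := by
      rw [← Nat.choose_succ_succ]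
      congr 1; omega
    have h3 := congrArg (fun n : ℕ => (n : ZMod p)) h2
    simp only [Nat.cast_add, h1] at h3
    rw [ih (by omega)] at h3
    have : (((p-1).choose (j+1) : ℕ) : ZMod p) = -(-1)^j := by linear_combination h3
    rw [this, pow_succ]; ring

lemma cp_div (hp5' : 5 ≤ p) {i : ℕ} (hi : i < (p-1)/2) :
    (2*i+1) * (p.choose (2*i+1) / p) = (p-1).choose (2*i) := by
  have hm := podd p hp5'
  have hiodd : 2*i+1 < p := by omega
  have hdvd : p ∣ p.choose (2*i+1) := hp.out.dvd_choose_self (by omega) hiodd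
  have key : p * (p-1).choose (2*i) = p.choose (2*i+1) * (2*i+1) := by
    have h := Nat.add_one_mul_choose_eq (p-1) (2*i)
    rwa [Nat.sub_add_cancel (by omega)] at h
  apply Nat.eq_of_mul_eq_mul_left (show 0 < p by omega)
  calc p * ((2*i+1) * (p.choose (2*i+1) / p))
      = (2*i+1) * (p * (p.choose (2*i+1) / p)) := by ring
    _ = (2*i+1) * p.choose (2*i+1) := by rw [Nat.mul_div_cancel' hdvd]
    _ = p * (p-1).choose (2*i) := by rw [key]; ring

lemma cp_dvd (hp5' : 5 ≤ p) {i : ℕ} (hi : i < (p-1)/2) : p ∣ p.choose (2*i+1) := by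
  have hm := podd p hp5'
  exact hp.out.dvd_choose_self (by omega) (by omega)

lemma c_cast (hp5' : 5 ≤ p) {i : ℕ} (hi : i < (p-1)/2) :
    ((p.choose (2*i+1) / p : ℕ) : ZMod p) = ((2*i+1 : ℕ) : ZMod p)⁻¹ := by
  have hm := podd p hp5'
  have h := congrArg (fun n : ℕ => (n : ZMod p)) (cp_div p hp5' hi)
  simp only [Nat.cast_mul] at h
  rw [choose_p_sub_one p (by omega), pow_mul, neg_one_sq, one_pow] at h
  exact (inv_eq_of_mul_eq_one_right h).symm

lemma neg_four_mul (hp5' : 5 ≤ p) {k : ℕ} (hk : k < (p-1)/2) :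
    (-4 : ZMod p) * (((p-1)/2 - k : ℕ) : ZMod p) = 2 * (2*(k:ZMod p)+1) := by
  have hm := podd p hp5'
  have h1 : (2 : ZMod p) * (((p-1)/2 - k : ℕ) : ZMod p) = -(2*(k:ZMod p)+1) := by
    have h2 : ((2 * ((p-1)/2 - k) : ℕ) : ZMod p) = ((p - (2*k+1) : ℕ) : ZMod p) := by
      congr 1; omega
    rw [Nat.cast_sub (by omega), ZMod.natCast_self] at h2
    push_cast at h2
    linear_combination h2
  calc (-4 : ZMod p) * (((p-1)/2 - k : ℕ) : ZMod p)
      = -2 * ((2:ZMod p) * (((p-1)/2 - k : ℕ) : ZMod p)) := by ring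
    _ = 2 * (2*(k:ZMod p)+1) := by rw [h1]; ring

lemma central_binom_eq (hp5' : 5 ≤ p) {k : ℕ} (hk : k ≤ (p-1)/2) :
    (((2*k).choose k : ℕ) : ZMod p) = (-4)^k * ((((p-1)/2).choose k : ℕ) : ZMod p) := by
  have hm := podd p hp5'
  induction k with
  | zero => simp
  | succ k ih =>
    have hk' : k ≤ (p-1)/2 := by omega
    have ihk := ih hk'
    have hne : ((k+1 : ℕ) : ZMod p) ≠ 0 := natcast_ne_zero p (by omega) (by omega)
    apply mul_right_cancel₀ hne
    have hnat1 : (k+1) * (2*(k+1)).choose (k+1) = 2 * (2*k+1) * (2*k).choose k := by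
      have := Nat.succ_mul_centralBinom_succ k
      simpa [Nat.centralBinom, Nat.mul_succ, Nat.succ_eq_add_one] using this
    have hc1 : (((2*(k+1)).choose (k+1) : ℕ) : ZMod p) * ((k+1:ℕ) : ZMod p)
        = 2 * (2*(k:ZMod p)+1) * (((2*k).choose k : ℕ) : ZMod p) := by
      have := congrArg (fun n : ℕ => (n : ZMod p)) hnat1
      push_cast at this ⊢
      linear_combination this
    have hnat2 : ((p-1)/2).choose (k+1) * (k+1) = ((p-1)/2).choose k * ((p-1)/2 - k) :=
      Nat.choose_succ_right_eq _ _
    have hc2 : ((((p-1)/2).choose (k+1) : ℕ) : ZMod p) * ((k+1:ℕ) : ZMod p)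
        = ((((p-1)/2).choose k : ℕ) : ZMod p) * ((((p-1)/2 - k) : ℕ) : ZMod p) := by
      have := congrArg (fun n : ℕ => (n : ZMod p)) hnat2
      push_cast at this ⊢
      linear_combination this
    rw [hc1, ihk]
    rw [show ((-4:ZMod p))^(k+1) * ((((p-1)/2).choose (k+1) : ℕ) : ZMod p) * ((k+1:ℕ) : ZMod p)
        = (-4)^k * ((-4) * (((((p-1)/2).choose (k+1) : ℕ) : ZMod p) * ((k+1:ℕ) : ZMod p))) by ring,
      hc2]
    rw [show ((-4:ZMod p)) * (((((p-1)/2).choose k : ℕ) : ZMod p) * ((((p-1)/2 - k) : ℕ) : ZMod p))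
        = (((((p-1)/2).choose k : ℕ) : ZMod p)) * ((-4) * ((((p-1)/2 - k) : ℕ) : ZMod p)) by ring,
      neg_four_mul p hp5' (by omega)]
    ring

lemma harmZ_succ (k : ℕ) :
    harmonicZMod p (k+1) = harmonicZMod p k + ((k+1 : ℕ) : ZMod p)⁻¹ := by
  rw [harmonicZMod, Finset.sum_Icc_succ_top (by omega), harmonicZMod]

lemma binom_harmonic (x : ZMod p) :
    ∀ n, n ≤ (p-1)/2 →
    ∑ k ∈ range (n+1), ((n.choose k : ℕ) : ZMod p) * harmonicZMod p k * x^k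
      = ∑ j ∈ Icc 1 n, ((1+x)^n - (1+x)^(n-j)) * ((j : ℕ) : ZMod p)⁻¹ := by
  intro n
  induction n with
  | zero => intro _; simp [harmonicZMod]
  | succ n ih =>
    intro hn1
    have hm2 : (p-1)/2 < p := by omega
    have ihn := ih (by omega)
    have hn1ne : ((n+1 : ℕ) : ZMod p) ≠ 0 := natcast_ne_zero p (by omega) (by omega)
    have hLHS : ∑ k ∈ range (n+2), (((n+1).choose k : ℕ) : ZMod p) * harmonicZMod p k * x^k
        = (1+x) * (∑ k ∈ range (n+1), ((n.choose k : ℕ) : ZMod p) * harmonicZMod p k * x^k)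
          + ((1+x)^(n+1) - 1) * ((n+1 : ℕ) : ZMod p)⁻¹ := by
      rw [Finset.sum_range_succ' (fun k => (((n+1).choose k : ℕ) : ZMod p) * harmonicZMod p k * x^k)]
      have hf0 : (((n+1).choose 0 : ℕ) : ZMod p) * harmonicZMod p 0 * x^0 = 0 := by
        simp [harmonicZMod]
      rw [hf0, add_zero]
      have hsplit : ∀ k ∈ range (n+1),
          (((n+1).choose (k+1) : ℕ) : ZMod p) * harmonicZMod p (k+1) * x^(k+1)
          = x * (((n.choose k : ℕ) : ZMod p) * harmonicZMod p k * x^k)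
            + ((n.choose (k+1) : ℕ) : ZMod p) * harmonicZMod p (k+1) * x^(k+1)
            + (((n+1).choose (k+1) : ℕ) : ZMod p) * ((n+1 : ℕ) : ZMod p)⁻¹ * x^(k+1) := by
        intro k hk
        rw [Finset.mem_range] at hk
        have hkne : ((k+1 : ℕ) : ZMod p) ≠ 0 := natcast_ne_zero p (by omega) (by omega)
        have hpas : (((n+1).choose (k+1) : ℕ) : ZMod p)
            = ((n.choose k : ℕ) : ZMod p) + ((n.choose (k+1) : ℕ) : ZMod p) := by
          rw [Nat.choose_succ_succ]; push_cast; ring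
        have hcast : ((n+1:ℕ) : ZMod p) * ((n.choose k : ℕ) : ZMod p)
            = (((n+1).choose (k+1) : ℕ) : ZMod p) * ((k+1:ℕ) : ZMod p) := by
          have := congrArg (fun a : ℕ => (a : ZMod p)) (Nat.add_one_mul_choose_eq n k)
          push_cast at this ⊢; linear_combination this
        have hinv : (((n+1).choose (k+1) : ℕ) : ZMod p) * ((n+1 : ℕ) : ZMod p)⁻¹
            = ((n.choose k : ℕ) : ZMod p) * ((k+1 : ℕ) : ZMod p)⁻¹ := by
          apply mul_right_cancel₀ (mul_ne_zero hn1ne hkne)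
          have e1 : (((n+1).choose (k+1) : ℕ) : ZMod p) * ((n+1 : ℕ) : ZMod p)⁻¹
              * (((n+1:ℕ) : ZMod p) * ((k+1:ℕ) : ZMod p))
              = (((n+1).choose (k+1) : ℕ) : ZMod p) * ((k+1:ℕ) : ZMod p)
                * (((n+1 : ℕ) : ZMod p)⁻¹ * ((n+1:ℕ) : ZMod p)) := by ring
          have e2 : ((n.choose k : ℕ) : ZMod p) * ((k+1 : ℕ) : ZMod p)⁻¹
              * (((n+1:ℕ) : ZMod p) * ((k+1:ℕ) : ZMod p))
              = ((n.choose k : ℕ) : ZMod p) * ((n+1:ℕ) : ZMod p)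
                * (((k+1 : ℕ) : ZMod p)⁻¹ * ((k+1:ℕ) : ZMod p)) := by ring
          rw [e1, e2, inv_mul_cancel₀ hn1ne, inv_mul_cancel₀ hkne, mul_one, mul_one]
          linear_combination -hcast
        rw [harmZ_succ, hpas]
        rw [show (((n.choose k : ℕ) : ZMod p) + ((n.choose (k+1) : ℕ) : ZMod p))
              * (harmonicZMod p k + ((k+1 : ℕ) : ZMod p)⁻¹) * x^(k+1)
            = x * (((n.choose k : ℕ) : ZMod p) * harmonicZMod p k * x^k)
              + ((n.choose (k+1) : ℕ) : ZMod p)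
                  * (harmonicZMod p k + ((k+1 : ℕ) : ZMod p)⁻¹) * x^(k+1)
              + (((n.choose k : ℕ) : ZMod p) * ((k+1 : ℕ) : ZMod p)⁻¹) * x^(k+1) by
          rw [pow_succ]; ring]
        rw [← hinv, ← harmZ_succ]
        linear_combination (x^(k+1) * (((n+1:ℕ) : ZMod p))⁻¹) * hpas
      rw [Finset.sum_congr rfl hsplit]
      rw [Finset.sum_add_distrib, Finset.sum_add_distrib]
      have hsum2 : ∑ k ∈ range (n+1), ((n.choose (k+1) : ℕ) : ZMod p) * harmonicZMod p (k+1) * x^(k+1)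
          = ∑ k ∈ range (n+1), ((n.choose k : ℕ) : ZMod p) * harmonicZMod p k * x^k := by
        have h1 := Finset.sum_range_succ' (fun k => ((n.choose k : ℕ) : ZMod p) * harmonicZMod p k * x^k) (n+1)
        have h2 := Finset.sum_range_succ (fun k => ((n.choose k : ℕ) : ZMod p) * harmonicZMod p k * x^k) (n+1)
        have htop : ((n.choose (n+1) : ℕ) : ZMod p) * harmonicZMod p (n+1) * x^(n+1) = 0 := by
          rw [Nat.choose_eq_zero_of_lt (by omega)]; simp
        have hz : ((n.choose 0 : ℕ) : ZMod p) * harmonicZMod p 0 * x^0 = 0 := by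
          simp [harmonicZMod]
        rw [h2, htop, add_zero] at h1
        rw [hz, add_zero] at h1
        exact h1.symm
      have hsum3 : ∑ k ∈ range (n+1), (((n+1).choose (k+1) : ℕ) : ZMod p) * ((n+1 : ℕ) : ZMod p)⁻¹ * x^(k+1)
          = ((1+x)^(n+1) - 1) * ((n+1 : ℕ) : ZMod p)⁻¹ := by
        have hap : (x + 1)^(n+1) = ∑ j ∈ range (n+2), x^j * 1^(n+1-j) * ((n+1).choose j : ZMod p) :=
          add_pow x 1 (n+1)
        have hap2 : (1+x)^(n+1) = ∑ k ∈ range (n+1), (((n+1).choose (k+1) : ℕ) : ZMod p) * x^(k+1) + 1 := by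
          rw [add_comm 1 x, hap, Finset.sum_range_succ' (fun j => x^j * 1^(n+1-j) * ((n+1).choose j : ZMod p))]
          congr 1
          · apply Finset.sum_congr rfl
            intro k _
            simp only [one_pow]
            ring
          · simp
        rw [hap2, add_sub_cancel_right, Finset.sum_mul]
        apply Finset.sum_congr rfl
        intro k _
        ring
      rw [hsum2, hsum3]
      have hx : ∑ k ∈ range (n+1), x * (((n.choose k : ℕ) : ZMod p) * harmonicZMod p k * x^k)
          = x * ∑ k ∈ range (n+1), ((n.choose k : ℕ) : ZMod p) * harmonicZMod p k * x^k := by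
        rw [Finset.mul_sum]
      rw [hx]
      ring
    have hRHS : ∑ j ∈ Icc 1 (n+1), ((1+x)^(n+1) - (1+x)^(n+1-j)) * ((j : ℕ) : ZMod p)⁻¹
        = (1+x) * (∑ j ∈ Icc 1 n, ((1+x)^n - (1+x)^(n-j)) * ((j : ℕ) : ZMod p)⁻¹)
          + ((1+x)^(n+1) - 1) * ((n+1 : ℕ) : ZMod p)⁻¹ := by
      rw [Finset.sum_Icc_succ_top (by omega : 1 ≤ n+1)]
      rw [Nat.sub_self, pow_zero, Finset.mul_sum]
      congr 1
      apply Finset.sum_congr rfl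
      intro j hj
      rw [Finset.mem_Icc] at hj
      have : n + 1 - j = (n - j) + 1 := by omega
      rw [this, pow_succ, pow_succ]
      ring
    rw [hLHS, hRHS, ihn]

end main
end SCBH

open Finset SCBH in
theorem sum_central_binom_harmonic (p : ℕ) [Fact p.Prime] (hp5 : 5 ≤ p) :
    ∑ k ∈ Finset.range p, ((2 * k).choose k : ZMod p) * harmonicZMod p k =
      -((legendre3 p : ZMod p) * (fermatQuotient p 3 : ZMod p)) := by
  have hp : Fact p.Prime := ‹_›
  set m := (p-1)/2 with hmdef
  have hm : 2*m+1 = p := podd p hp5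
  have h2ne : ((2:ℕ) : ZMod p) ≠ 0 := natcast_ne_zero p (by omega) (by omega)
  -- Step 1: tail vanishes
  have htail : ∑ k ∈ range p, ((2 * k).choose k : ZMod p) * harmonicZMod p k
      = ∑ k ∈ range (m+1), (((2 * k).choose k : ℕ) : ZMod p) * harmonicZMod p k := by
    apply (Finset.sum_subset (Finset.range_subset_range.mpr (by omega)) ?_).symm
    intro k hk hk2
    rw [Finset.mem_range] at hk
    rw [Finset.mem_range, not_lt] at hk2
    have hz : (((2*k).choose k : ℕ) : ZMod p) = 0 := by
      rw [ZMod.natCast_eq_zero_iff]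
      exact Nat.Prime.dvd_choose hp.out (by omega) (by omega) (by omega)
    rw [hz, zero_mul]
  -- Step 2: central binomial coefficients
  have hcb : ∑ k ∈ range (m+1), (((2 * k).choose k : ℕ) : ZMod p) * harmonicZMod p k
      = ∑ k ∈ range (m+1), ((m.choose k : ℕ) : ZMod p) * harmonicZMod p k * (-4)^k := by
    apply Finset.sum_congr rfl
    intro k hk
    rw [Finset.mem_range] at hk
    rw [central_binom_eq p hp5 (by omega)]
    ring
  -- Step 3: the binomial-harmonic identity
  have hid := binom_harmonic p (-4) m le_rfl
  have h34 : (1 + (-4 : ZMod p)) = -3 := by norm_num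
  rw [h34] at hid
  -- Step 4: split RHS of hid
  have hsplit : ∑ j ∈ Icc 1 m, ((-3:ZMod p)^m - (-3)^(m-j)) * ((j : ℕ) : ZMod p)⁻¹
      = (-3:ZMod p)^m * harmonicZMod p m
        - ∑ j ∈ Icc 1 m, (-3:ZMod p)^(m-j) * ((j : ℕ) : ZMod p)⁻¹ := by
    rw [harmonicZMod, Finset.mul_sum, ← Finset.sum_sub_distrib]
    apply Finset.sum_congr rfl
    intro j _
    ring
  -- Step 5: reindexing
  have hHrw : harmonicZMod p m = ∑ i ∈ range m, ((m-i : ℕ) : ZMod p)⁻¹ := by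
    rw [harmonicZMod, sum_Icc_one (fun j => ((j:ℕ) : ZMod p)⁻¹) m,
      ← Finset.sum_range_reflect (fun i => (((i+1 : ℕ)) : ZMod p)⁻¹) m]
    apply Finset.sum_congr rfl
    intro i hi
    rw [Finset.mem_range] at hi
    congr 2
    omega
  have hGrw : ∑ j ∈ Icc 1 m, (-3:ZMod p)^(m-j) * ((j : ℕ) : ZMod p)⁻¹
      = ∑ i ∈ range m, (-3:ZMod p)^i * ((m-i : ℕ) : ZMod p)⁻¹ := by
    rw [sum_Icc_one (fun j => (-3:ZMod p)^(m-j) * ((j:ℕ) : ZMod p)⁻¹) m,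
      ← Finset.sum_range_reflect (fun i => (-3:ZMod p)^(m-(i+1)) * (((i+1 : ℕ)) : ZMod p)⁻¹) m]
    apply Finset.sum_congr rfl
    intro i hi
    rw [Finset.mem_range] at hi
    have e1 : m - (m - 1 - i + 1) = i := by omega
    have e2 : m - 1 - i + 1 = m - i := by omega
    rw [e1, e2]
  -- Step 6: inverse of m-i
  have minv : ∀ i ∈ range m, ((m-i : ℕ) : ZMod p)⁻¹
      = -2 * ((p.choose (2*i+1) / p : ℕ) : ZMod p) := by
    intro i hi
    rw [Finset.mem_range] at hi
    rw [c_cast p hp5 hi]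
    have hone : ((2*i+1:ℕ):ZMod p) ≠ 0 := natcast_ne_zero p (by omega) (by omega)
    apply inv_eq_of_mul_eq_one_right
    apply mul_left_cancel₀ h2ne
    have h4 := neg_four_mul p hp5 hi
    calc ((2:ℕ):ZMod p) * (((m-i : ℕ) : ZMod p) * (-2 * ((2*i+1 : ℕ) : ZMod p)⁻¹))
        = ((-4 : ZMod p) * ((m-i : ℕ) : ZMod p)) * ((2*i+1 : ℕ) : ZMod p)⁻¹ := by
          push_cast; ring
      _ = (2 * (2*(i:ZMod p)+1)) * ((2*i+1 : ℕ) : ZMod p)⁻¹ := by rw [h4]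
      _ = 2 * (((2*i+1 : ℕ) : ZMod p) * ((2*i+1 : ℕ) : ZMod p)⁻¹) := by push_cast; ring
      _ = ((2:ℕ):ZMod p) * 1 := by rw [mul_inv_cancel₀ hone]; push_cast; ring
  -- Step 7: integer sums
  set T1 : ℤ := ∑ i ∈ range m, ((p.choose (2*i+1) / p : ℕ) : ℤ) * (-3)^i with hT1def
  set T2 : ℤ := ∑ i ∈ range m, ((p.choose (2*i+1) / p : ℕ) : ℤ) with hT2def
  have hHm : harmonicZMod p m = -2 * ((T2 : ℤ) : ZMod p) := by
    rw [hHrw, Finset.sum_congr rfl minv, hT2def, Int.cast_sum, Finset.mul_sum]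
    apply Finset.sum_congr rfl
    intro i _
    rw [Int.cast_natCast]
  have hGm : ∑ i ∈ range m, (-3:ZMod p)^i * ((m-i : ℕ) : ZMod p)⁻¹
      = -2 * ((T1 : ℤ) : ZMod p) := by
    rw [Finset.sum_congr rfl (fun i hi => by rw [minv i hi]), hT1def, Int.cast_sum, Finset.mul_sum]
    apply Finset.sum_congr rfl
    intro i _
    simp only [Int.cast_mul, Int.cast_pow, Int.cast_neg, Int.cast_ofNat, Int.cast_natCast]
    ring
  -- Step 8: integer identities
  have hchoose_eq : ∀ i ∈ range m, (p.choose (2*i+1) : ℤ)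
      = (p:ℤ) * ((p.choose (2*i+1) / p : ℕ) : ℤ) := by
    intro i hi
    rw [Finset.mem_range] at hi
    have h : ((p.choose (2*i+1) / p : ℕ) : ℤ) * (p:ℤ) = (p.choose (2*i+1) : ℤ) := by
      exact_mod_cast congrArg (fun n : ℕ => (n : ℤ)) (Nat.div_mul_cancel (cp_dvd p hp5 hi))
    linear_combination -h
  have hpT1 : (p:ℤ) * T1 = legendre3 p * 2^(p-1) - (-3)^m := by
    have hS := sum_odd_neg3 p hp.out hp5
    rw [Finset.sum_range_succ] at hS
    rw [show 2*((p-1)/2)+1 = p from hm, Nat.choose_self] at hS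
    rw [hT1def, Finset.mul_sum]
    have : ∑ i ∈ range m, (p:ℤ) * (((p.choose (2*i+1) / p : ℕ) : ℤ) * (-3)^i)
        = ∑ i ∈ range m, (p.choose (2*i+1) : ℤ) * (-3)^i := by
      apply Finset.sum_congr rfl
      intro i hi
      rw [hchoose_eq i hi]; ring
    rw [this]
    push_cast at hS
    linear_combination hS
  have hpT2 : (p:ℤ) * T2 = 2^(p-1) - 1 := by
    have hS := sum_odd_one p hp5
    rw [Finset.sum_range_succ] at hS
    rw [show 2*((p-1)/2)+1 = p from hm, Nat.choose_self] at hS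
    rw [hT2def, Finset.mul_sum]
    have : ∑ i ∈ range m, (p:ℤ) * ((p.choose (2*i+1) / p : ℕ) : ℤ)
        = ∑ i ∈ range m, (p.choose (2*i+1) : ℤ) := by
      apply Finset.sum_congr rfl
      intro i hi
      have h := hchoose_eq i hi
      linear_combination -h
    rw [this]
    have : ∑ i ∈ range m, (p.choose (2*i+1) : ℤ)
        = ∑ i ∈ range m, (p.choose (2*i+1) : ℤ) * 1^i := by
      apply Finset.sum_congr rfl; intro i _; rw [one_pow, mul_one]
    rw [this]
    push_cast at hS
    linear_combination hS
  -- Step 9: Fermat quotient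
  have h3ne : ((3:ℕ) : ZMod p) ≠ 0 := natcast_ne_zero p (by omega) (by omega)
  have hfz : (((3:ℤ)^(p-1) - 1 : ℤ) : ZMod p) = 0 := by
    push_cast
    rw [ZMod.pow_card_sub_one_eq_one (by exact_mod_cast h3ne)]
    ring
  have hdvdF : (p:ℤ) ∣ (3:ℤ)^(p-1) - 1 := by
    rwa [ZMod.intCast_zmod_eq_zero_iff_dvd] at hfz
  have hpF : (p:ℤ) * fermatQuotient p 3 = 3^(p-1) - 1 := by
    rw [fermatQuotient]
    exact Int.mul_ediv_cancel' hdvdF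
  -- Step 10: legendre3 facts
  have hmod3 : p % 3 = 1 ∨ p % 3 = 2 := by
    rcases mod_six p hp.out hp5 with h | h <;> omega
  have hε2 : legendre3 p * legendre3 p = 1 := by
    rw [legendre3]
    rcases hmod3 with h | h <;> simp [h]
  -- Step 11: core divisibility
  set ε := legendre3 p with hεdef
  set u : ℤ := ε * (-3)^m with hudef
  have hdvd1 : (p:ℤ) ∣ 1 - u := by
    have d1 : (p:ℤ) ∣ 2^(p-1) - 1 := ⟨T2, by linarith [hpT2]⟩
    have d2 : (p:ℤ) ∣ ε * 2^(p-1) - (-3)^m := ⟨T1, by linarith [hpT1]⟩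
    have : 1 - u = -(2^(p-1) - 1) + ε * (ε * 2^(p-1) - (-3)^m) := by
      rw [hudef]; linear_combination (-(2:ℤ)^(p-1)) * hε2
    rw [this]
    exact dvd_add (dvd_neg.mpr d1) (Dvd.dvd.mul_left d2 ε)
  have h2p : (2:ℤ)^p = 2 * 2^(p-1) := by
    conv_lhs => rw [show p = p-1+1 by omega]
    rw [pow_succ]; ring
  have hdvd2 : (p:ℤ) ∣ 2^p - 1 - u := by
    have d1 : (p:ℤ) ∣ 2^(p-1) - 1 := ⟨T2, by linarith [hpT2]⟩
    have : (2:ℤ)^p - 1 - u = 2*(2^(p-1) - 1) + (1 - u) := by rw [h2p]; ring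
    rw [this]
    exact dvd_add (Dvd.dvd.mul_left d1 2) hdvd1
  have h3p : (3:ℤ)^(p-1) = ((-3)^m)^2 := by
    rw [show p-1 = 2*m by omega, neg_pow, mul_pow, ← pow_mul, ← pow_mul,
      show m*2 = 2*m by ring, pow_mul (-1:ℤ)]
    norm_num
  set E : ℤ := -2*(-3)^m*T2 + 2*T1 with hEdef
  have hplarge : (p:ℤ) * (E + ε * fermatQuotient p 3)
      = ε * ((1-u)*(2^p-1-u)) := by
    rw [hEdef, hudef, h2p]
    linear_combination (-2*(-3:ℤ)^m) * hpT2 + 2 * hpT1 + ε * hpF + ε * h3p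
      + (2*2^(p-1)*(-3:ℤ)^m - ε*((-3:ℤ)^m)^2) * hε2
  have hpne : (p:ℤ) ≠ 0 := by positivity
  have hdvdE : (p:ℤ) ∣ E + ε * fermatQuotient p 3 := by
    have hq : (p:ℤ) * (p:ℤ) ∣ (1-u)*(2^p-1-u) := mul_dvd_mul hdvd1 hdvd2
    have hq2 : (p:ℤ) * (p:ℤ) ∣ ε * ((1-u)*(2^p-1-u)) := Dvd.dvd.mul_left hq ε
    rw [← hplarge] at hq2
    exact (mul_dvd_mul_iff_left hpne).mp hq2
  -- Step 12: conclude
  have hcastzero : ((E + ε * fermatQuotient p 3 : ℤ) : ZMod p) = 0 := by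
    rwa [ZMod.intCast_zmod_eq_zero_iff_dvd]
  rw [htail, hcb, hid, hsplit, hHm, hGrw, hGm]
  have hm3cast : ((-3:ZMod p))^m = (((-3:ℤ)^m : ℤ) : ZMod p) := by push_cast; ring
  rw [hm3cast]
  rw [hEdef] at hcastzero
  push_cast at hcastzero ⊢
  linear_combination hcastzero
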